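/- For j odd, the set of primes p for which there exists n ≥ 1 with v_p(∑_{d|n} μ(n/d) F_{d^j}) < v_p(n) is infinite; consequently (C F_{n^j}) fails the Dold condition for every positive integer constant C, i.e., (F_{n^j}) is not almost realizable. -/

import Mathlib

open Polynomial

lemma square_five_of_root {p : ℕ} [Fact p.Prime] (c : ZMod p) (h : c ^ 2 + c - 1 = 0) :
    IsSquare (5 : ZMod p) := by
  refine ⟨2 * c + 1, ?_⟩
  linear_combination (-4 : ZMod p) * h

lemma fib_pow_prime_mod (p : ℕ) (hp : p.Prime) (hp2 : p ≠ 2)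
    (h5 : ¬ IsSquare (5 : ZMod p)) {j : ℕ} (hj : Odd j) :
    ((Nat.fib (p ^ j) : ZMod p)) = -1 := by
  haveI : Fact p.Prime := ⟨hp⟩
  set K := ZMod p with hK
  set f : K[X] := X ^ 2 - X - 1 with hf
  have hdeg : f.degree = 2 := by
    rw [hf]
    compute_degree!
  have hinj : Function.Injective (algebraMap K (AdjoinRoot f)) := by
    rw [AdjoinRoot.algebraMap_eq]
    exact AdjoinRoot.coe_injective (by rw [hdeg]; norm_num)
  set R := AdjoinRoot f with hR
  haveI : CharP R p := charP_of_injective_algebraMap hinj p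
  set α : R := AdjoinRoot.root f with hα0
  have hα : α ^ 2 = α + 1 := by
    have h0 := AdjoinRoot.eval₂_root f
    rw [hf] at h0
    simp only [eval₂_sub, eval₂_pow, eval₂_X, eval₂_one] at h0
    linear_combination h0
  -- Euler's criterion
  have h5ne : (5 : K) ≠ 0 := fun h => h5 ⟨0, by rw [h]; ring⟩
  have h5p : (5 : K) ^ (p / 2) = -1 := by
    rcases ZMod.pow_div_two_eq_neg_one_or_one p h5ne with h | h
    · exact absurd ((ZMod.euler_criterion p h5ne).mpr h) h5
    · exact h
  have hmap5 : algebraMap K R 5 = 5 := map_ofNat _ 5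
  set β : R := 2 * α - 1 with hβ0
  have hβ2 : β ^ 2 = (5 : R) := by
    rw [hβ0]
    linear_combination (4 : R) * hα
  have h5R : (5 : R) ^ (p / 2) = -1 := by
    rw [← hmap5, ← map_pow, h5p, map_neg, map_one]
  have hpodd : p % 2 = 1 := Nat.odd_iff.mp (hp.odd_of_ne_two hp2)
  have hpe : 2 * (p / 2) + 1 = p := by omega
  have hβp : β ^ p = -β := by
    calc β ^ p = (β ^ 2) ^ (p / 2) * β := by
          rw [← pow_mul, ← pow_succ, hpe]
      _ = -β := by rw [hβ2, h5R]; ring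
  have h2K : (2 : K) ≠ 0 := by
    intro h
    have h2 : ((2 : ℕ) : K) = 0 := by push_cast; exact h
    have := (ZMod.natCast_eq_zero_iff 2 p).mp h2
    exact hp2 ((Nat.prime_dvd_prime_iff_eq hp Nat.prime_two).mp this)
  have h2u : IsUnit (2 : R) := by
    have : IsUnit (2 : K) := isUnit_iff_ne_zero.mpr h2K
    have h2 : algebraMap K R 2 = 2 := map_ofNat _ 2
    exact h2 ▸ this.map (algebraMap K R)
  have h2pow : (2 : R) ^ p = 2 := by
    have h2 : algebraMap K R 2 = 2 := map_ofNat _ 2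
    rw [← h2, ← map_pow, ZMod.pow_card]
  have hαp : α ^ p = 1 - α := by
    have h1 : (2 * α - 1) ^ p = (2 * α) ^ p - 1 ^ p := sub_pow_char ..
    rw [← hβ0, hβp, mul_pow, h2pow, one_pow, hβ0] at h1
    refine h2u.mul_left_cancel ?_
    linear_combination -h1
  have hiter : ∀ i : ℕ, α ^ (p ^ (2 * i + 1)) = 1 - α := by
    intro i
    induction i with
    | zero => simpa using hαp
    | succ n ih =>
      have e1 : 2 * (n + 1) + 1 = (2 * n + 1) + 1 + 1 := by ring
      have hsub : ((1 : R) - α) ^ p = 1 - α ^ p := by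
        rw [sub_pow_char, one_pow]
      have e2 : (1 : R) - (1 - α) = α := by ring
      calc α ^ p ^ (2 * (n + 1) + 1)
          = ((α ^ p ^ (2 * n + 1)) ^ p) ^ p := by
            rw [e1, pow_succ, pow_succ, pow_mul, pow_mul]
        _ = ((1 - α) ^ p) ^ p := by rw [ih]
        _ = (1 - α ^ p) ^ p := by rw [hsub]
        _ = (1 - (1 - α)) ^ p := by rw [hαp]
        _ = α ^ p := by rw [e2]
        _ = 1 - α := hαp
  have hfib : ∀ n : ℕ, α ^ (n + 1)
      = algebraMap K R (Nat.fib (n + 1) : K) * α + algebraMap K R (Nat.fib n : K) := by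
    intro n
    induction n with
    | zero => simp
    | succ n ih =>
      rw [pow_succ, ih, Nat.fib_add_two]
      push_cast
      linear_combination ((Nat.fib (n + 1) : R)) * hα
  obtain ⟨i, rfl⟩ := hj
  have hple : 1 ≤ p ^ (2 * i + 1) := Nat.one_le_pow _ _ hp.pos
  have hne : p ^ (2 * i + 1) = (p ^ (2 * i + 1) - 1) + 1 := by omega
  have hkey : algebraMap K R (Nat.fib (p ^ (2 * i + 1)) : K) * α
      + algebraMap K R (Nat.fib (p ^ (2 * i + 1) - 1) : K) = 1 - α := by
    rw [← hiter i, hne]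
    exact (hfib _).symm.trans (by rw [← hne])
  set a : K := (Nat.fib (p ^ (2 * i + 1)) : K) + 1 with ha0
  set b : K := (Nat.fib (p ^ (2 * i + 1) - 1) : K) - 1 with hb0
  set A : R := algebraMap K R a with hA0
  set B : R := algebraMap K R b with hB0
  have e : A * α + B = 0 := by
    rw [hA0, hB0, ha0, hb0, map_add, map_sub, map_one]
    linear_combination hkey
  have hquad : A * A - B * B - A * B = 0 := by
    linear_combination (-(A * A)) * hα + (A * α - B - A) * e
  have hquadK : a * a - b * b - a * b = 0 := by
    apply hinj
    rw [map_sub, map_sub, map_mul, map_mul, map_mul, map_zero]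
    exact hquad
  have haz : a = 0 := by
    by_contra han
    apply h5
    refine ⟨(2 * b + a) * a⁻¹, ?_⟩
    field_simp
    linear_combination (4 : K) * hquadK
  have hz : (Nat.fib (p ^ (2 * i + 1)) : K) + 1 = 0 := haz
  linear_combination hz
/-- A sequence `a : ℕ → ℕ` (indexed from 1) is realizable if there is a set `X`
and a map `T : X → X` such that for every `n ≥ 1` the set of points fixed by the
`n`-th iterate of `T` is finite with cardinality `a n`. -/
def IsRealizable (a : ℕ → ℕ) : Prop :=
  ∃ (X : Type) (T : X → X), ∀ n : ℕ, 1 ≤ n →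
    {x : X | T^[n] x = x}.Finite ∧ {x : X | T^[n] x = x}.ncard = a n

/-- The Möbius-transformed sum `∑_{d ∣ n} μ(n/d) a_d`. -/
def doldSum (a : ℕ → ℕ) (n : ℕ) : ℤ :=
  ∑ d ∈ n.divisors, (ArithmeticFunction.moebius (n / d) : ℤ) * (a d : ℤ)

lemma doldSum_prime (a : ℕ → ℕ) {p : ℕ} (hp : p.Prime) :
    doldSum a p = (a p : ℤ) - (a 1 : ℤ) := by
  unfold doldSum
  rw [hp.divisors, Finset.sum_pair hp.one_lt.ne, Nat.div_one, Nat.div_self hp.pos,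
    ArithmeticFunction.moebius_apply_prime hp, ArithmeticFunction.moebius_apply_one]
  ring

lemma not_isSquare_three_zmod5 : ¬IsSquare (3 : ZMod 5) := by decide

lemma key_prime_facts (j : ℕ) (hj : Odd j) {p : ℕ} (hp : p.Prime) (hmod : (p : ZMod 5) = 3) :
    p ≠ 2 ∧ ¬ ((p : ℤ) ∣ (Nat.fib (p ^ j) : ℤ) - 1) := by
  haveI : Fact p.Prime := ⟨hp⟩
  haveI : Fact (Nat.Prime 5) := ⟨by norm_num⟩
  have hp2 : p ≠ 2 := by
    rintro rfl
    exact absurd hmod (by decide)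
  have hiff := ZMod.exists_sq_eq_prime_iff_of_mod_four_eq_one (p := 5) (q := p) (by norm_num) hp2
  have hns : ¬ IsSquare (5 : ZMod p) := by
    rw [show ((5 : ℕ) : ZMod p) = (5 : ZMod p) by push_cast; ring] at hiff
    rw [← hiff, hmod]
    exact not_isSquare_three_zmod5
  have hcong := fib_pow_prime_mod p hp hp2 hns hj
  refine ⟨hp2, fun h => ?_⟩
  have h0 : (((Nat.fib (p ^ j) : ℤ) - 1 : ℤ) : ZMod p) = 0 :=
    (ZMod.intCast_zmod_eq_zero_iff_dvd _ p).mpr h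
  push_cast at h0
  rw [hcong] at h0
  have h2 : ((2 : ℕ) : ZMod p) = 0 := by push_cast; linear_combination -h0
  have := (ZMod.natCast_eq_zero_iff 2 p).mp h2
  exact hp2 ((Nat.prime_dvd_prime_iff_eq hp Nat.prime_two).mp this)

theorem fib_odd_powers_not_almost_realizable (j : ℕ) (hj : Odd j) :
    {p : ℕ | p.Prime ∧ ∃ n : ℕ, 1 ≤ n ∧
        ¬ ((p : ℤ) ^ (padicValNat p n) ∣ doldSum (fun m => Nat.fib (m ^ j)) n)}.Infinite ∧
    ∀ C : ℕ, 0 < C → ∃ n : ℕ, 1 ≤ n ∧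
      ¬ (n : ℤ) ∣ (C : ℤ) * doldSum (fun m => Nat.fib (m ^ j)) n := by
  have hSinf : {p : ℕ | p.Prime ∧ (p : ZMod 5) = 3}.Infinite :=
    Nat.infinite_setOf_prime_and_eq_mod (a := (3 : ZMod 5)) (by decide)
  constructor
  · apply hSinf.mono
    rintro p ⟨hp, hmod⟩
    obtain ⟨hp2, hdvd⟩ := key_prime_facts j hj hp hmod
    refine ⟨hp, p, hp.one_lt.le, ?_⟩
    rw [padicValNat.self hp.one_lt, pow_one, doldSum_prime _ hp]
    simpa [Nat.fib_one] using hdvd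
  · intro C hC
    obtain ⟨p, hpS, hpC⟩ := Set.infinite_iff_exists_gt.mp hSinf C
    obtain ⟨hp, hmod⟩ := hpS
    obtain ⟨hp2, hdvd⟩ := key_prime_facts j hj hp hmod
    refine ⟨p, hp.one_lt.le, fun h => ?_⟩
    rw [doldSum_prime _ hp] at h
    simp only [one_pow, Nat.fib_one, Nat.cast_one] at h
    have hpp : Prime (p : ℤ) := Nat.prime_iff_prime_int.mp hp
    rcases hpp.dvd_mul.mp h with h1 | h1
    · have : p ∣ C := Int.natCast_dvd_natCast.mp h1
      exact absurd (Nat.le_of_dvd hC this) (not_le.mpr hpC)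
    · exact hdvd h1
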